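/- Let n ≥ 2, D ≥ 1, p ∈ [0,1], q = 1 − p, and let a ≥ 1 be an integer. Then the number of α ∈ ℕ^n with α_1+⋯+α_n = D + a and α_i ≥ a for all i equals m_n(D+a−na), and the expected value of W_a (the number of such α at which the witness event w_α occurs for the random set G of the graded model M(n,D,p)) equals m_n(D+a−na) · (1 − q^{m_{n−1}(a−n+1)})^n · q^{m_n(a−n)}. -/

import Mathlib

open Finset Filter

/-- The set `Ω_D` of exponent vectors of degree `D` in `n` variables. -/
def degSet (n D : ℕ) : Finset (Fin n → ℕ) := Finset.Nat.antidiagonalTuple n D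

/-- Expectation of the random variable `X` under the graded model `M(n,D,p)`. -/
noncomputable def grmEx (n D : ℕ) (p : ℝ) (X : Finset (Fin n → ℕ) → ℝ) : ℝ :=
  ∑ G ∈ (degSet n D).powerset,
    X G * (p ^ G.card * (1 - p) ^ ((degSet n D).card - G.card))

/-- `m_n(d) = C(d+n-1, n-1)` for `d ≥ 0`, and `0` for `d < 0`. -/
def mfun (n : ℕ) (d : ℤ) : ℕ := if 0 ≤ d then (d.toNat + n - 1).choose (n - 1) else 0

/-- The witness event `w_α`. -/
def wEvent {n : ℕ} (α : Fin n → ℕ) (G : Finset (Fin n → ℕ)) : Prop :=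
  (∀ i, ∃ β ∈ G, β i = α i ∧ ∀ j, j ≠ i → β j < α j) ∧
    ¬ ∃ β ∈ G, ∀ j, β j < α j

/-- `W_a G` is the number of `α` with `∑ α = D + a` and `α i ≥ a` for all `i`
at which the witness event `w_α` occurs for `G`. -/
noncomputable def Wa (n D a : ℕ) (G : Finset (Fin n → ℕ)) : ℕ :=
  Set.ncard {α : Fin n → ℕ | (∑ i, α i = D + a) ∧ (∀ i, a ≤ α i) ∧ wEvent α G}
open Finset

lemma sum_count_univ {k : ℕ} (s : Multiset (Fin k)) :
    ∑ i : Fin k, s.count i = Multiset.card s := by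
  rw [← Multiset.toFinset_sum_count_eq s]
  refine (Finset.sum_subset (Finset.subset_univ _) ?_).symm
  intro x _ hx
  simpa [Multiset.count_eq_zero] using fun h => hx (Multiset.mem_toFinset.2 h)

lemma card_adt (k n : ℕ) : (Finset.Nat.antidiagonalTuple (k+1) n).card = (n + k).choose k := by
  have e : Sym (Fin (k+1)) n ≃ {x : Fin (k+1) → ℕ // x ∈ Finset.Nat.antidiagonalTuple (k+1) n} :=
    Equiv.subtypeEquiv
      ((Multiset.toFinsupp (α := Fin (k+1))).toEquiv.trans Finsupp.equivFunOnFinite)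
      (fun s => by
        rw [Finset.Nat.mem_antidiagonalTuple]
        have : ∀ i, ((Multiset.toFinsupp (α := Fin (k+1))).toEquiv.trans
            Finsupp.equivFunOnFinite) s i = s.count i := by
          intro i; simp
        rw [Finset.sum_congr rfl (fun i _ => this i), sum_count_univ])
  have h1 : (Finset.Nat.antidiagonalTuple (k+1) n).card
      = Fintype.card (Sym (Fin (k+1)) n) := by
    rw [← Fintype.card_coe, Fintype.card_congr e]
  rw [h1, Sym.card_sym_eq_choose, Fintype.card_fin]
  have h2 : k + 1 + n - 1 = n + k := by omega
  rw [h2]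
  have := Nat.choose_symm (Nat.le_add_right n k)
  rw [Nat.add_sub_cancel_left] at this
  exact this.symm

lemma box_empty {m : ℕ} (α : Fin m → ℕ) (N : ℕ) (h : ∑ i, α i < N + m) :
    (Finset.Nat.antidiagonalTuple m N).filter (fun β => ∀ j, β j < α j) = ∅ := by
  rw [Finset.filter_eq_empty_iff]
  intro β hβ hlt
  rw [Finset.Nat.mem_antidiagonalTuple] at hβ
  have hle : ∑ j, (β j + 1) ≤ ∑ j, α j := Finset.sum_le_sum (fun j _ => hlt j)
  rw [Finset.sum_add_distrib, Finset.sum_const, Finset.card_univ, Fintype.card_fin,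
    smul_eq_mul, mul_one, hβ] at hle
  omega

lemma card_strict_box {m : ℕ} (α : Fin m → ℕ) (N s : ℕ) (hsum : ∑ i, α i = N + m + s)
    (hb : ∀ i, s + 1 ≤ α i) :
    ((Finset.Nat.antidiagonalTuple m N).filter (fun β => ∀ j, β j < α j)).card
      = (Finset.Nat.antidiagonalTuple m s).card := by
  apply Finset.card_nbij (fun β => fun j => α j - 1 - β j)
  · intro β hβ
    simp only [Finset.mem_coe, Finset.mem_filter, Finset.Nat.mem_antidiagonalTuple] at hβ ⊢
    obtain ⟨h1, h2⟩ := hβ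
    have key : ∑ j, ((α j - 1 - β j) + (β j + 1)) = N + m + s := by
      rw [← hsum]; exact Finset.sum_congr rfl (fun j _ => by have := h2 j; omega)
    rw [Finset.sum_add_distrib, Finset.sum_add_distrib, h1, Finset.sum_const,
      Finset.card_univ, Fintype.card_fin, smul_eq_mul, mul_one] at key
    omega
  · intro β hβ γ hγ heq
    simp only [Finset.coe_filter, Set.mem_setOf_eq, Finset.Nat.mem_antidiagonalTuple] at hβ hγ
    funext j
    have h1 := hβ.2 j
    have h2 := hγ.2 j
    have := congrFun heq j
    simp only at this
    omega
  · intro γ hγ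
    simp only [Finset.coe_filter, Set.mem_setOf_eq, Finset.mem_coe,
      Finset.Nat.mem_antidiagonalTuple] at hγ
    have hγle : ∀ j, γ j ≤ s := by
      intro j
      rw [← hγ]
      exact Finset.single_le_sum (fun i _ => Nat.zero_le _) (Finset.mem_univ j)
    refine ⟨fun j => α j - 1 - γ j, ?_, ?_⟩
    · simp only [Finset.mem_coe, Finset.mem_filter, Finset.Nat.mem_antidiagonalTuple]
      constructor
      · have key : ∑ j, ((α j - 1 - γ j) + (γ j + 1)) = N + m + s := by
          rw [← hsum]
          exact Finset.sum_congr rfl (fun j _ => by have := hb j; have := hγle j; omega)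
        rw [Finset.sum_add_distrib, Finset.sum_add_distrib, hγ, Finset.sum_const,
          Finset.card_univ, Fintype.card_fin, smul_eq_mul, mul_one] at key
        omega
      · intro j; have := hb j; have := hγle j; omega
    · funext j
      have := hb j; have := hγle j
      simp only
      omega

lemma ge_shift_empty {m : ℕ} (N b : ℕ) (h : N < m * b) :
    (Finset.Nat.antidiagonalTuple m N).filter (fun α => ∀ i, b ≤ α i) = ∅ := by
  rw [Finset.filter_eq_empty_iff]
  intro β hβ hge
  rw [Finset.Nat.mem_antidiagonalTuple] at hβ
  have hle : ∑ _j : Fin m, b ≤ ∑ j, β j := Finset.sum_le_sum (fun j _ => hge j)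
  rw [Finset.sum_const, Finset.card_univ, Fintype.card_fin, smul_eq_mul, hβ] at hle
  omega

lemma card_ge_shift {m : ℕ} (N b : ℕ) (h : m * b ≤ N) :
    ((Finset.Nat.antidiagonalTuple m N).filter (fun α => ∀ i, b ≤ α i)).card
      = (Finset.Nat.antidiagonalTuple m (N - m * b)).card := by
  apply Finset.card_nbij (fun α => fun i => α i - b)
  · intro α hα
    simp only [Finset.mem_coe, Finset.mem_filter, Finset.Nat.mem_antidiagonalTuple] at hα ⊢
    obtain ⟨h1, h2⟩ := hα
    have key : ∑ j, ((α j - b) + b) = N := by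
      rw [← h1]; exact Finset.sum_congr rfl (fun j _ => by have := h2 j; omega)
    rw [Finset.sum_add_distrib, Finset.sum_const, Finset.card_univ, Fintype.card_fin,
      smul_eq_mul] at key
    omega
  · intro β hβ γ hγ heq
    simp only [Finset.coe_filter, Set.mem_setOf_eq, Finset.Nat.mem_antidiagonalTuple] at hβ hγ
    funext j
    have h1 := hβ.2 j
    have h2 := hγ.2 j
    have := congrFun heq j
    simp only at this
    omega
  · intro γ hγ
    simp only [Finset.mem_coe, Finset.Nat.mem_antidiagonalTuple] at hγ
    refine ⟨fun j => γ j + b, ?_, ?_⟩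
    · simp only [Finset.mem_coe, Finset.mem_filter, Finset.Nat.mem_antidiagonalTuple]
      refine ⟨?_, fun j => by omega⟩
      rw [Finset.sum_add_distrib, Finset.sum_const, Finset.card_univ, Fintype.card_fin,
        smul_eq_mul, hγ]
      omega
    · funext j; simp
open Finset

variable {X : Type*} [DecidableEq X]

noncomputable def pEx (p q : ℝ) (Ω : Finset X) (f : Finset X → ℝ) : ℝ :=
  ∑ G ∈ Ω.powerset, f G * (p ^ G.card * q ^ (Ω.card - G.card))

lemma sum_pow_weights (p q : ℝ) (hpq : p + q = 1) (Ω : Finset X) :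
    ∑ G ∈ Ω.powerset, p ^ G.card * q ^ (Ω.card - G.card) = 1 := by
  induction Ω using Finset.induction_on with
  | empty => simp
  | @insert a s ha ih =>
    rw [Finset.sum_powerset_insert ha]
    have h1 : ∑ t ∈ s.powerset, p ^ t.card * q ^ ((insert a s).card - t.card)
        = q * ∑ t ∈ s.powerset, p ^ t.card * q ^ (s.card - t.card) := by
      rw [Finset.mul_sum]
      refine Finset.sum_congr rfl fun t ht => ?_
      have h2 : t.card ≤ s.card := Finset.card_le_card (Finset.mem_powerset.1 ht)
      rw [Finset.card_insert_of_notMem ha,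
        show s.card + 1 - t.card = (s.card - t.card) + 1 by omega, pow_succ]
      ring
    have h2 : ∑ t ∈ s.powerset, p ^ (insert a t).card * q ^ ((insert a s).card - (insert a t).card)
        = p * ∑ t ∈ s.powerset, p ^ t.card * q ^ (s.card - t.card) := by
      rw [Finset.mul_sum]
      refine Finset.sum_congr rfl fun t ht => ?_
      have hat : a ∉ t := fun h => ha (Finset.mem_powerset.1 ht h)
      rw [Finset.card_insert_of_notMem ha, Finset.card_insert_of_notMem hat, pow_succ,
        show s.card + 1 - (t.card + 1) = s.card - t.card by omega]
      ring
    rw [h1, h2, ih]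
    linarith

lemma pEx_one (p q : ℝ) (hpq : p + q = 1) (Ω : Finset X) : pEx p q Ω (fun _ => 1) = 1 := by
  simp only [pEx, one_mul]
  exact sum_pow_weights p q hpq Ω

lemma pEx_split (p q : ℝ) (Ω S : Finset X) (hS : S ⊆ Ω) (f g : Finset X → ℝ) :
    pEx p q Ω (fun G => f (G ∩ S) * g (G ∩ (Ω \ S))) = pEx p q S f * pEx p q (Ω \ S) g := by
  unfold pEx
  rw [Finset.sum_mul_sum, ← Finset.sum_product']
  refine (Finset.sum_nbij' (fun G => (G ∩ S, G ∩ (Ω \ S))) (fun z => z.1 ∪ z.2) ?_ ?_ ?_ ?_ ?_)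
  · intro G hG
    simp only [Finset.mem_product, Finset.mem_powerset]
    exact ⟨Finset.inter_subset_right, Finset.inter_subset_right⟩
  · intro z hz
    simp only [Finset.mem_product, Finset.mem_powerset] at hz
    exact Finset.mem_powerset.2
      (Finset.union_subset (hz.1.trans hS) (hz.2.trans (Finset.sdiff_subset)))
  · intro G hG
    dsimp only
    rw [← Finset.inter_union_distrib_left, Finset.union_sdiff_of_subset hS,
      Finset.inter_eq_left.2 (Finset.mem_powerset.1 hG)]
  · intro z hz
    simp only [Finset.mem_product, Finset.mem_powerset] at hz
    obtain ⟨hH, hK⟩ := hz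
    have hKS : z.2 ∩ S = ∅ :=
      Finset.disjoint_iff_inter_eq_empty.1 (Finset.sdiff_disjoint.mono_left hK)
    have hHS : z.1 ∩ (Ω \ S) = ∅ :=
      Finset.disjoint_iff_inter_eq_empty.1 (Finset.sdiff_disjoint.symm.mono_left hH)
    have e1 : (z.1 ∪ z.2) ∩ S = z.1 := by
      rw [Finset.union_inter_distrib_right, hKS, Finset.inter_eq_left.2 hH, Finset.union_empty]
    have e2 : (z.1 ∪ z.2) ∩ (Ω \ S) = z.2 := by
      rw [Finset.union_inter_distrib_right, hHS, Finset.inter_eq_left.2 hK, Finset.empty_union]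
    exact Prod.ext e1 e2
  · intro G hG
    have hGΩ := Finset.mem_powerset.1 hG
    have hdisj : Disjoint (G ∩ S) (G ∩ (Ω \ S)) :=
      Finset.sdiff_disjoint.symm.mono Finset.inter_subset_right Finset.inter_subset_right
    have hunion : (G ∩ S) ∪ (G ∩ (Ω \ S)) = G := by
      rw [← Finset.inter_union_distrib_left, Finset.union_sdiff_of_subset hS,
        Finset.inter_eq_left.2 hGΩ]
    have hcard : (G ∩ S).card + (G ∩ (Ω \ S)).card = G.card := by
      rw [← Finset.card_union_of_disjoint hdisj, hunion]
    have hc1 : (G ∩ S).card ≤ S.card := Finset.card_le_card Finset.inter_subset_right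
    have hc2 : (G ∩ (Ω \ S)).card ≤ (Ω \ S).card := Finset.card_le_card Finset.inter_subset_right
    have hΩ : (Ω \ S).card + S.card = Ω.card := Finset.card_sdiff_add_card_eq_card hS
    have hGle : G.card ≤ Ω.card := Finset.card_le_card hGΩ
    have e2 : Ω.card - ((G ∩ S).card + (G ∩ (Ω \ S)).card)
        = (S.card - (G ∩ S).card) + ((Ω \ S).card - (G ∩ (Ω \ S)).card) := by
      omega
    dsimp only
    rw [← hcard, e2, pow_add, pow_add]
    ring

lemma pEx_indep (p q : ℝ) (hpq : p + q = 1) {ι : Type*} [DecidableEq ι] (I : Finset ι)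
    (B : ι → Finset X) (f : ι → Finset X → ℝ) :
    ∀ (Ω : Finset X), (∀ i ∈ I, B i ⊆ Ω) → ((I : Set ι).PairwiseDisjoint B) →
      pEx p q Ω (fun G => ∏ i ∈ I, f i (G ∩ B i)) = ∏ i ∈ I, pEx p q (B i) (f i) := by
  induction I using Finset.induction_on with
  | empty =>
    intro Ω _ _
    simpa only [Finset.prod_empty] using pEx_one p q hpq Ω
  | @insert a s ha ih =>
    intro Ω hB hd
    have haΩ : B a ⊆ Ω := hB a (Finset.mem_insert_self a s)
    have hsub : ∀ i ∈ s, B i ⊆ Ω \ B a := by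
      intro i hi
      rw [Finset.subset_sdiff]
      refine ⟨hB i (Finset.mem_insert_of_mem hi), ?_⟩
      exact hd (Finset.mem_insert_of_mem hi) (Finset.mem_insert_self a s)
        (fun h => ha (h ▸ hi))
    have hfun : ∀ G : Finset X, (∏ i ∈ insert a s, f i (G ∩ B i))
        = f a (G ∩ B a) * ∏ i ∈ s, f i ((G ∩ (Ω \ B a)) ∩ B i) := by
      intro G
      rw [Finset.prod_insert ha]
      congr 1
      refine Finset.prod_congr rfl fun i hi => ?_
      rw [Finset.inter_assoc, Finset.inter_eq_right.2 (hsub i hi)]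
    calc pEx p q Ω (fun G => ∏ i ∈ insert a s, f i (G ∩ B i))
        = pEx p q Ω (fun G => f a (G ∩ B a) * (fun K => ∏ i ∈ s, f i (K ∩ B i)) (G ∩ (Ω \ B a))) := by
          unfold pEx
          exact Finset.sum_congr rfl fun G _ => by dsimp only; rw [hfun G]
      _ = pEx p q (B a) (f a) * pEx p q (Ω \ B a) (fun K => ∏ i ∈ s, f i (K ∩ B i)) :=
          pEx_split p q Ω (B a) haΩ (f a) (fun K => ∏ i ∈ s, f i (K ∩ B i))
      _ = ∏ i ∈ insert a s, pEx p q (B i) (f i) := by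
          rw [ih (Ω \ B a) hsub (hd.subset (Finset.coe_subset.2 (Finset.subset_insert a s)))]
          rw [Finset.prod_insert ha]

lemma pEx_ind_empty (p q : ℝ) (S : Finset X) :
    pEx p q S (fun H => if H = ∅ then 1 else 0) = q ^ S.card := by
  unfold pEx
  rw [Finset.sum_eq_single ∅]
  · simp
  · intro G _ hne; simp [hne]
  · intro h; exact absurd (Finset.empty_mem_powerset S) h

lemma pEx_ind_nonempty (p q : ℝ) (hpq : p + q = 1) (S : Finset X) :
    pEx p q S (fun H => if H.Nonempty then 1 else 0) = 1 - q ^ S.card := by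
  have h : ∀ H : Finset X, (if H.Nonempty then (1:ℝ) else 0)
      = 1 - (if H = ∅ then 1 else 0) := by
    intro H
    by_cases hH : H = ∅ <;> simp [hH, Finset.nonempty_iff_ne_empty]
  have := pEx_ind_empty p q S
  unfold pEx at this ⊢
  calc ∑ G ∈ S.powerset, (if G.Nonempty then (1:ℝ) else 0) * (p ^ G.card * q ^ (S.card - G.card))
      = ∑ G ∈ S.powerset, ((p ^ G.card * q ^ (S.card - G.card))
          - (if G = ∅ then 1 else 0) * (p ^ G.card * q ^ (S.card - G.card))) := by
        refine Finset.sum_congr rfl fun G _ => ?_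
        rw [h G]; ring
    _ = 1 - q ^ S.card := by
        rw [Finset.sum_sub_distrib, sum_pow_weights p q hpq, this]
lemma prob_w (p q : ℝ) (hpq : p + q = 1) (Ω A : Finset X) {n : ℕ} (B : Fin n → Finset X)
    (hA : A ⊆ Ω) (hB : ∀ i, B i ⊆ Ω) (hAB : ∀ i, Disjoint (B i) A)
    (hBB : ∀ i j, i ≠ j → Disjoint (B i) (B j)) :
    pEx p q Ω (fun G => if (∀ i, (G ∩ B i).Nonempty) ∧ G ∩ A = ∅ then 1 else 0)
      = (∏ i, (1 - q ^ (B i).card)) * q ^ A.card := by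
  set B' : Option (Fin n) → Finset X := fun o => o.elim A B with hB'
  set f' : Option (Fin n) → Finset X → ℝ :=
    fun o => o.elim (fun H => if H = ∅ then 1 else 0)
      (fun _ H => if H.Nonempty then 1 else 0) with hf'
  have hpt : ∀ G : Finset X, (if (∀ i, (G ∩ B i).Nonempty) ∧ G ∩ A = ∅ then (1:ℝ) else 0)
      = ∏ o : Option (Fin n), f' o (G ∩ B' o) := by
    intro G
    rw [Fintype.prod_option]
    have h1 : f' none (G ∩ B' none) = if G ∩ A = ∅ then 1 else 0 := rfl
    have h2 : ∀ i : Fin n, f' (some i) (G ∩ B' (some i))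
        = if (G ∩ B i).Nonempty then 1 else 0 := fun i => rfl
    rw [h1, Finset.prod_congr rfl (fun i _ => h2 i), Finset.prod_boole]
    by_cases hc1 : G ∩ A = ∅ <;> by_cases hc2 : ∀ i, (G ∩ B i).Nonempty <;>
      simp [hc1, hc2]
  have hcalc : pEx p q Ω (fun G => if (∀ i, (G ∩ B i).Nonempty) ∧ G ∩ A = ∅ then 1 else 0)
      = pEx p q Ω (fun G => ∏ o : Option (Fin n), f' o (G ∩ B' o)) := by
    unfold pEx
    exact Finset.sum_congr rfl fun G _ => by dsimp only; rw [hpt G]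
  rw [hcalc, pEx_indep p q hpq Finset.univ B' f' Ω ?_ ?_]
  · rw [Fintype.prod_option]
    have e1 : pEx p q (B' none) (f' none) = q ^ A.card := pEx_ind_empty p q A
    have e2 : ∀ i : Fin n, pEx p q (B' (some i)) (f' (some i)) = 1 - q ^ (B i).card :=
      fun i => pEx_ind_nonempty p q hpq (B i)
    rw [e1, Finset.prod_congr rfl (fun i _ => e2 i)]
    ring
  · intro o _
    cases o with
    | none => exact hA
    | some i => exact hB i
  · intro x _ y _ hxy
    cases x with
    | none =>
      cases y with
      | none => exact absurd rfl hxy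
      | some j => exact (hAB j).symm
    | some i =>
      cases y with
      | none => exact hAB i
      | some j => exact hBB i j (fun h => hxy (by rw [h]))
instance wEventDecidable {n : ℕ} (α : Fin n → ℕ) (G : Finset (Fin n → ℕ)) :
    Decidable (wEvent α G) :=
  decidable_of_iff ((∀ i, ∃ β ∈ G, β i = α i ∧ ∀ j, j ≠ i → β j < α j) ∧
    ¬ ∃ β ∈ G, ∀ j, β j < α j) Iff.rfl

lemma cardA (m D a : ℕ) (α : Fin (m+2) → ℕ) (hαsum : ∑ i, α i = D + a)
    (hαge : ∀ i, a ≤ α i) :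
    ((degSet (m+2) D).filter (fun β => ∀ j, β j < α j)).card
      = mfun (m+2) ((a:ℤ) - ((m+2:ℕ):ℤ)) := by
  unfold degSet
  by_cases hc : m + 2 ≤ a
  · rw [card_strict_box α D (a - (m+2)) (by omega) (fun i => by have := hαge i; omega)]
    rw [card_adt]
    simp only [mfun]
    rw [if_pos (by omega)]
    have ht : ((a:ℤ) - ((m+2:ℕ):ℤ)).toNat = a - (m+2) := by omega
    rw [ht]
    congr 1 <;> omega
  · rw [box_empty α D (by omega), Finset.card_empty]
    simp only [mfun]
    rw [if_neg (by omega)]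

lemma cardB (m D a : ℕ) (α : Fin (m+2) → ℕ) (hαsum : ∑ i, α i = D + a)
    (hαge : ∀ i, a ≤ α i) (ha : 1 ≤ a) (i : Fin (m+2)) :
    ((degSet (m+2) D).filter
        (fun β => β i = α i ∧ ∀ j, j ≠ i → β j < α j)).card
      = mfun (m+1) ((a:ℤ) - ((m+2:ℕ):ℤ) + 1) := by
  unfold degSet
  have hsplit : α i + ∑ j : Fin (m+1), α (i.succAbove j) = D + a := by
    rw [← Fin.sum_univ_succAbove α i, hαsum]
  have hothers : (m+1) * a ≤ ∑ j : Fin (m+1), α (i.succAbove j) := by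
    calc (m+1)*a = ∑ _j : Fin (m+1), a := by
          rw [Finset.sum_const, Finset.card_univ, Fintype.card_fin, smul_eq_mul]
      _ ≤ _ := Finset.sum_le_sum (fun j _ => hαge _)
  have haM : a ≤ (m+1) * a := Nat.le_mul_of_pos_left a (by omega)
  have hαiD : α i ≤ D := by omega
  have step1 : ((Finset.Nat.antidiagonalTuple (m+2) D).filter
        (fun β => β i = α i ∧ ∀ j, j ≠ i → β j < α j)).card
      = ((Finset.Nat.antidiagonalTuple (m+1) (D - α i)).filter
        (fun δ => ∀ j, δ j < α (i.succAbove j))).card := by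
    apply Finset.card_nbij (fun β => fun j => β (i.succAbove j))
    · intro β hβ
      simp only [Finset.mem_coe, Finset.mem_filter, Finset.Nat.mem_antidiagonalTuple] at hβ ⊢
      obtain ⟨hsum, heq, hlt⟩ := hβ
      have h1 : β i + ∑ j, β (i.succAbove j) = D := by
        rw [← Fin.sum_univ_succAbove β i, hsum]
      exact ⟨by omega, fun j => hlt _ (Fin.succAbove_ne i j)⟩
    · intro β hβ γ hγ heq
      simp only [Finset.coe_filter, Set.mem_setOf_eq, Finset.Nat.mem_antidiagonalTuple] at hβ hγ
      funext x
      by_cases hx : x = i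
      · rw [hx, hβ.2.1, hγ.2.1]
      · obtain ⟨j, rfl⟩ := Fin.exists_succAbove_eq hx
        exact congrFun heq j
    · intro δ hδ
      simp only [Finset.mem_coe, Finset.mem_filter, Finset.Nat.mem_antidiagonalTuple] at hδ
      obtain ⟨hδsum, hδlt⟩ := hδ
      refine ⟨Fin.insertNth (α := fun _ => ℕ) i (α i) δ, ?_, ?_⟩
      · simp only [Finset.mem_coe, Finset.mem_filter, Finset.Nat.mem_antidiagonalTuple]
        refine ⟨?_, ?_, ?_⟩
        · rw [Fin.sum_univ_succAbove _ i,
            Fin.insertNth_apply_same (α := fun _ => ℕ) i (α i) δ]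
          have he : ∑ j, Fin.insertNth (α := fun _ => ℕ) i (α i) δ (i.succAbove j)
              = ∑ j, δ j :=
            Finset.sum_congr rfl fun j _ =>
              Fin.insertNth_apply_succAbove (α := fun _ => ℕ) i (α i) δ j
          rw [he, hδsum]
          omega
        · exact Fin.insertNth_apply_same (α := fun _ => ℕ) i (α i) δ
        · intro j hj
          obtain ⟨z, rfl⟩ := Fin.exists_succAbove_eq hj
          rw [Fin.insertNth_apply_succAbove (α := fun _ => ℕ) i (α i) δ]
          exact hδlt z
      · funext j
        exact Fin.insertNth_apply_succAbove (α := fun _ => ℕ) i (α i) δ j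
  rw [step1]
  clear step1
  by_cases hc : m + 1 ≤ a
  · have hs : ∑ j : Fin (m+1), α (i.succAbove j) = (D - α i) + (m+1) + (a - (m+1)) := by
      omega
    have hb : ∀ j, (a - (m+1)) + 1 ≤ α (i.succAbove j) := fun j => by
      have := hαge (i.succAbove j); omega
    rw [card_strict_box _ (D - α i) (a - (m+1)) hs hb, card_adt]
    simp only [mfun]
    rw [if_pos (by omega)]
    have ht : ((a:ℤ) - ((m+2:ℕ):ℤ) + 1).toNat = a - (m+1) := by omega
    rw [ht]
    congr 1 <;> omega
  · rw [box_empty _ _ (by omega), Finset.card_empty]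
    simp only [mfun]
    rw [if_neg (by omega)]

lemma prob_witness (p q : ℝ) (hpq : p + q = 1) (m D a : ℕ) (ha : 1 ≤ a)
    (α : Fin (m+2) → ℕ) (hαsum : ∑ i, α i = D + a) (hαge : ∀ i, a ≤ α i) :
    pEx p q (degSet (m+2) D) (fun G => if wEvent α G then (1:ℝ) else 0)
      = (1 - q ^ mfun (m+1) ((a:ℤ) - ((m+2:ℕ):ℤ) + 1)) ^ (m+2)
        * q ^ mfun (m+2) ((a:ℤ) - ((m+2:ℕ):ℤ)) := by
  classical
  have hGint : ∀ (G : Finset (Fin (m+2) → ℕ)), G ⊆ degSet (m+2) D →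
      ∀ (P : (Fin (m+2) → ℕ) → Prop) (_ : DecidablePred P),
        G ∩ (degSet (m+2) D).filter P = G.filter P := by
    intro G hG P hP
    ext β
    simp only [Finset.mem_inter, Finset.mem_filter]
    exact ⟨fun h => ⟨h.1, h.2.2⟩, fun h => ⟨h.1, hG h.1, h.2⟩⟩
  have hwe : ∀ G ∈ (degSet (m+2) D).powerset,
      (wEvent α G ↔
        ((∀ i, (G ∩ ((degSet (m+2) D).filter
            (fun β => β i = α i ∧ ∀ j, j ≠ i → β j < α j))).Nonempty)
          ∧ G ∩ ((degSet (m+2) D).filter (fun β => ∀ j, β j < α j)) = ∅)) := by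
    intro G hG
    have hGΩ := Finset.mem_powerset.1 hG
    unfold wEvent
    refine and_congr (forall_congr' fun i => ?_) ?_
    · rw [hGint G hGΩ _ _, Finset.filter_nonempty_iff]
    · rw [hGint G hGΩ _ _, Finset.filter_eq_empty_iff]
      constructor
      · intro h β hβG hβ
        exact h ⟨β, hβG, hβ⟩
      · rintro h ⟨β, hβG, hβ⟩
        exact h hβG hβ
  have hstep : pEx p q (degSet (m+2) D) (fun G => if wEvent α G then (1:ℝ) else 0)
      = pEx p q (degSet (m+2) D) (fun G =>
          if (∀ i, (G ∩ ((degSet (m+2) D).filter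
              (fun β => β i = α i ∧ ∀ j, j ≠ i → β j < α j))).Nonempty)
            ∧ G ∩ ((degSet (m+2) D).filter (fun β => ∀ j, β j < α j)) = ∅
          then 1 else 0) := by
    unfold pEx
    refine Finset.sum_congr rfl fun G hG => ?_
    dsimp only
    rw [if_congr (hwe G hG) rfl rfl]
  rw [hstep, prob_w p q hpq (degSet (m+2) D)
    ((degSet (m+2) D).filter (fun β => ∀ j, β j < α j))
    (fun i => (degSet (m+2) D).filter (fun β => β i = α i ∧ ∀ j, j ≠ i → β j < α j))
    (Finset.filter_subset _ _) (fun i => Finset.filter_subset _ _)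
    ?_ ?_]
  · have hcB : ∀ i ∈ (Finset.univ : Finset (Fin (m+2))),
        (1 - q ^ ((degSet (m+2) D).filter
            (fun β => β i = α i ∧ ∀ j, j ≠ i → β j < α j)).card)
          = (1 - q ^ mfun (m+1) ((a:ℤ) - ((m+2:ℕ):ℤ) + 1)) := by
      intro i _
      rw [cardB m D a α hαsum hαge ha i]
    rw [Finset.prod_congr rfl hcB, Finset.prod_const, Finset.card_univ, Fintype.card_fin,
      cardA m D a α hαsum hαge]
  · intro i
    rw [Finset.disjoint_left]
    intro β h1 h2
    simp only [Finset.mem_filter] at h1 h2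
    have := h2.2 i
    have := h1.2.1
    omega
  · intro i j hij
    rw [Finset.disjoint_left]
    intro β h1 h2
    simp only [Finset.mem_filter] at h1 h2
    have := h2.2.2 i (fun h => hij (h ▸ rfl))
    have := h1.2.1
    omega
theorem count_and_expectation_Wa
    (n D : ℕ) (hn : 2 ≤ n) (hD : 1 ≤ D) (p q : ℝ) (hp : p ∈ Set.Icc (0:ℝ) 1)
    (hq : q = 1 - p) (a : ℕ) (ha : 1 ≤ a) :
    Set.ncard {α : Fin n → ℕ | (∑ i, α i = D + a) ∧ ∀ i, a ≤ α i} =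
        mfun n ((D : ℤ) + a - n * a) ∧
      grmEx n D p (fun G => (Wa n D a G : ℝ)) =
        (mfun n ((D : ℤ) + a - n * a) : ℝ) *
          (1 - q ^ mfun (n - 1) ((a : ℤ) - n + 1)) ^ n * q ^ mfun n ((a : ℤ) - n) := by
  classical
  obtain ⟨m, rfl⟩ : ∃ m, n = m + 2 := ⟨n - 2, by omega⟩
  have hpq : p + q = 1 := by rw [hq]; ring
  have hqp : (1:ℝ) - p = q := by rw [hq]
  have hTset : {α : Fin (m+2) → ℕ | (∑ i, α i = D + a) ∧ ∀ i, a ≤ α i}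
      = ↑((Finset.Nat.antidiagonalTuple (m+2) (D+a)).filter (fun α => ∀ i, a ≤ α i)) := by
    ext α
    simp [Finset.Nat.mem_antidiagonalTuple]
  have hTcard : ((Finset.Nat.antidiagonalTuple (m+2) (D+a)).filter
        (fun α => ∀ i, a ≤ α i)).card
      = mfun (m+2) ((D : ℤ) + (a:ℤ) - ((m+2:ℕ):ℤ) * (a:ℤ)) := by
    have hz : ((m+2:ℕ):ℤ) * (a:ℤ) = (((m+2) * a : ℕ) : ℤ) := by push_cast; ring
    by_cases h : (m+2) * a ≤ D + a
    · rw [card_ge_shift _ _ h, card_adt]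
      simp only [mfun]
      rw [if_pos (by rw [hz]; omega)]
      have ht : ((D:ℤ) + (a:ℤ) - ((m+2:ℕ):ℤ) * (a:ℤ)).toNat = D + a - (m+2) * a := by
        rw [hz]; omega
      rw [ht]
      congr 1 <;> omega
    · rw [ge_shift_empty _ _ (by omega), Finset.card_empty]
      simp only [mfun]
      rw [if_neg (by rw [hz]; omega)]
  constructor
  · rw [hTset, Set.ncard_coe_finset, hTcard]
  · unfold grmEx
    simp only [hqp]
    have hWrw : ∀ G ∈ (degSet (m+2) D).powerset, ((Wa (m+2) D a G : ℝ))
        = ∑ α ∈ (Finset.Nat.antidiagonalTuple (m+2) (D+a)).filter (fun α => ∀ i, a ≤ α i),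
            (if wEvent α G then (1:ℝ) else 0) := by
      intro G _
      have hset2 : {α : Fin (m+2) → ℕ | (∑ i, α i = D + a) ∧ (∀ i, a ≤ α i) ∧ wEvent α G}
          = ↑((((Finset.Nat.antidiagonalTuple (m+2) (D+a)).filter
                (fun α => ∀ i, a ≤ α i))).filter (fun α => wEvent α G)) := by
        ext α
        simp only [Set.mem_setOf_eq, Finset.coe_filter, Finset.mem_filter,
          Finset.Nat.mem_antidiagonalTuple]
        tauto
      have hval : Wa (m+2) D a G
          = ((((Finset.Nat.antidiagonalTuple (m+2) (D+a)).filter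
              (fun α => ∀ i, a ≤ α i))).filter (fun α => wEvent α G)).card := by
        unfold Wa
        rw [hset2, Set.ncard_coe_finset]
      rw [hval, Finset.card_filter, Nat.cast_sum]
      exact Finset.sum_congr rfl fun α _ => by split_ifs <;> simp
    calc ∑ G ∈ (degSet (m+2) D).powerset,
          (Wa (m+2) D a G : ℝ) * (p ^ G.card * q ^ ((degSet (m+2) D).card - G.card))
        = ∑ α ∈ (Finset.Nat.antidiagonalTuple (m+2) (D+a)).filter (fun α => ∀ i, a ≤ α i),
            ∑ G ∈ (degSet (m+2) D).powerset,
              (if wEvent α G then (1:ℝ) else 0)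
                * (p ^ G.card * q ^ ((degSet (m+2) D).card - G.card)) := by
          rw [← Finset.sum_comm]
          refine Finset.sum_congr rfl fun G hG => ?_
          rw [hWrw G hG, Finset.sum_mul]
      _ = ∑ _α ∈ (Finset.Nat.antidiagonalTuple (m+2) (D+a)).filter (fun α => ∀ i, a ≤ α i),
            ((1 - q ^ mfun (m+1) ((a:ℤ) - ((m+2:ℕ):ℤ) + 1)) ^ (m+2)
              * q ^ mfun (m+2) ((a:ℤ) - ((m+2:ℕ):ℤ))) := by
          refine Finset.sum_congr rfl fun α hα => ?_
          rw [Finset.mem_filter, Finset.Nat.mem_antidiagonalTuple] at hα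
          exact prob_witness p q hpq m D a ha α hα.1 hα.2
      _ = (mfun (m+2) ((D : ℤ) + (a:ℤ) - ((m+2:ℕ):ℤ) * (a:ℤ)) : ℝ) *
            (1 - q ^ mfun (m + 2 - 1) ((a : ℤ) - ((m+2:ℕ):ℤ) + 1)) ^ (m+2)
              * q ^ mfun (m+2) ((a : ℤ) - ((m+2:ℕ):ℤ)) := by
          rw [Finset.sum_const, hTcard, nsmul_eq_mul]
          simp only [show m + 2 - 1 = m + 1 from rfl]
          ring
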